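/- Let p be an odd prime, φ the quadratic character of F_p, and χ a nontrivial multiplicative character of F_p. Then g(φχ)·g(χ⁻¹)/g(φ) = Σ_{t=2}^{p-1} χ(t²/(4(1-t))), where the sum is over t ∈ F_p with t ≠ 0, 1, and g denotes the Gauss sum. -/

import Mathlib

open Finset

theorem stmt_4 (p : ℕ) [Fact p.Prime] (hp : Odd p)
    (ζ : ℂ) (hζ : IsPrimitiveRoot ζ p)
    (χ : MulChar (ZMod p) ℂ) (hχ : χ ≠ 1) :
    letI φ : MulChar (ZMod p) ℂ := (quadraticChar (ZMod p)).ringHomComp (Int.castRingHom ℂ)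
    (∑ x : ZMod p, (φ * χ) x * ζ ^ x.val) * (∑ x : ZMod p, χ⁻¹ x * ζ ^ x.val)
        / (∑ x : ZMod p, φ x * ζ ^ x.val)
      = ∑ t ∈ univ.filter (fun t : ZMod p => t ≠ 0 ∧ t ≠ 1),
          χ (t ^ 2 / (4 * (1 - t))) := by
  set φ : MulChar (ZMod p) ℂ := (quadraticChar (ZMod p)).ringHomComp (Int.castRingHom ℂ) with hφdef
  have hp' : p.Prime := Fact.out
  have hpne2 : p ≠ 2 := by rintro rfl; exact (by decide : ¬ Odd 2) hp
  have hchar2 : ringChar (ZMod p) ≠ 2 := by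
    rw [ZMod.ringChar_zmod_n]; exact_mod_cast hpne2
  -- basic facts about φ
  have hφ1 : φ ≠ 1 := by
    obtain ⟨a, ha⟩ := quadraticChar_exists_neg_one' hchar2
    intro h
    have : φ a = 1 := by rw [h, MulChar.one_apply a.isUnit]
    rw [show φ a = ((quadraticChar (ZMod p) a : ℤ) : ℂ) from rfl, ha] at this
    norm_num at this
  have hφsq : ∀ {a : ZMod p}, a ≠ 0 → φ a * φ a = 1 := by
    intro a ha
    have : quadraticChar (ZMod p) a * quadraticChar (ZMod p) a = 1 := by
      rw [← sq]; exact quadraticChar_sq_one ha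
    calc φ a * φ a = ((quadraticChar (ZMod p) a * quadraticChar (ZMod p) a : ℤ) : ℂ) := by
          push_cast; rfl
      _ = 1 := by rw [this]; norm_num
  have h2ne : (2 : ZMod p) ≠ 0 := by
    intro h
    have : ((2 : ℕ) : ZMod p) = 0 := by push_cast; exact h
    have hdvd := (ZMod.natCast_eq_zero_iff 2 p).mp this
    have := (Nat.prime_dvd_prime_iff_eq hp' Nat.prime_two).mp hdvd
    exact hpne2 this
  have h4ne : (4 : ZMod p) ≠ 0 := by
    have : (4 : ZMod p) = 2 * 2 := by norm_num
    rw [this]; exact mul_ne_zero h2ne h2ne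
  -- the additive character
  haveI : NeZero p := ⟨hp'.ne_zero⟩
  set ψ : AddChar (ZMod p) ℂ := AddChar.zmodChar p hζ.pow_eq_one with hψdef
  have hψ : ψ.IsPrimitive := AddChar.zmodChar_primitive_of_primitive_root p hζ
  have hg : ∀ χ' : MulChar (ZMod p) ℂ, (∑ x : ZMod p, χ' x * ζ ^ x.val) = gaussSum χ' ψ := by
    intro χ'
    simp [gaussSum, hψdef, AddChar.zmodChar_apply]
  have hcard : (Fintype.card (ZMod p) : ℂ) ≠ 0 := by
    rw [ZMod.card]
    exact_mod_cast hp'.ne_zero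
  have hmulinv : (φ * χ) * χ⁻¹ = φ := by group
  have hχφ : (φ * χ) * χ⁻¹ ≠ 1 := by rw [hmulinv]; exact hφ1
  -- Step A: LHS = jacobiSum (φ*χ) χ⁻¹
  have stepA : (∑ x : ZMod p, (φ * χ) x * ζ ^ x.val) * (∑ x : ZMod p, χ⁻¹ x * ζ ^ x.val)
        / (∑ x : ZMod p, φ x * ζ ^ x.val) = jacobiSum (φ * χ) χ⁻¹ := by
    rw [hg, hg, hg,
      jacobiSum_eq_gaussSum_mul_gaussSum_div_gaussSum hcard hχφ hψ, hmulinv]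
  -- the middle sum
  set S : ℂ := ∑ s : ZMod p, (φ * χ) s * φ (s + 1) with hSdef
  -- Step B: jacobiSum (φ*χ) χ⁻¹ = S
  have stepB : jacobiSum (φ * χ) χ⁻¹ = S := by
    rw [jacobiSum, hSdef]
    rw [← Finset.sum_filter_of_ne (s := univ) (p := fun x : ZMod p => x ≠ 0 ∧ x ≠ 1)
        (f := fun x : ZMod p => (φ * χ) x * χ⁻¹ (1 - x)) ?_,
        ← Finset.sum_filter_of_ne (s := univ) (p := fun s : ZMod p => s ≠ 0 ∧ s ≠ -1)
        (f := fun s : ZMod p => (φ * χ) s * φ (s + 1)) ?_]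
    rotate_left
    · intro x _ hne
      constructor
      · rintro rfl; exact hne (by simp [MulChar.map_zero])
      · rintro rfl; exact hne (by simp [MulChar.map_zero])
    · intro s _ hne
      constructor
      · rintro rfl; exact hne (by simp [MulChar.map_zero])
      · rintro rfl; exact hne (by simp [MulChar.map_zero])
    refine Finset.sum_nbij' (i := fun x => x / (1 - x)) (j := fun s => s / (1 + s))
      ?_ ?_ ?_ ?_ ?_
    · intro x hx
      simp only [mem_filter, mem_univ, true_and] at hx ⊢
      obtain ⟨hx0, hx1⟩ := hx
      have hu : (1 : ZMod p) - x ≠ 0 := sub_ne_zero.mpr fun h => hx1 h.symm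
      refine ⟨div_ne_zero hx0 hu, fun h => ?_⟩
      rw [div_eq_iff hu] at h
      have : (1 : ZMod p) = 0 := by linear_combination h
      exact one_ne_zero this
    · intro s hs
      simp only [mem_filter, mem_univ, true_and] at hs ⊢
      obtain ⟨hs0, hs1⟩ := hs
      have hu : (1 : ZMod p) + s ≠ 0 := fun h => hs1 (by linear_combination h)
      refine ⟨div_ne_zero hs0 hu, fun h => ?_⟩
      rw [div_eq_iff hu] at h
      exact hs0 (by linear_combination -s * h)
    · intro x hx
      simp only [mem_filter, mem_univ, true_and] at hx
      have hu : (1 : ZMod p) - x ≠ 0 := sub_ne_zero.mpr fun h => hx.2 h.symm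
      have key : (1 : ZMod p) + x / (1 - x) = (1 - x)⁻¹ := by
        field_simp
        ring
      show x / (1 - x) / (1 + x / (1 - x)) = x
      rw [key, div_inv_eq_mul, div_mul_cancel₀ x hu]
    · intro s hs
      simp only [mem_filter, mem_univ, true_and] at hs
      have hu : (1 : ZMod p) + s ≠ 0 := fun h => hs.2 (by linear_combination h)
      have key : (1 : ZMod p) - s / (1 + s) = (1 + s)⁻¹ := by
        field_simp
        ring
      show s / (1 + s) / (1 - s / (1 + s)) = s
      rw [key, div_inv_eq_mul, div_mul_cancel₀ s hu]
    · intro x hx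
      simp only [mem_filter, mem_univ, true_and] at hx
      obtain ⟨hx0, hx1⟩ := hx
      have hu : (1 : ZMod p) - x ≠ 0 := sub_ne_zero.mpr fun h => hx1 h.symm
      have huinv : ((1 : ZMod p) - x)⁻¹ ≠ 0 := inv_ne_zero hu
      have h1 : x / (1 - x) + 1 = (1 - x)⁻¹ := by
        field_simp
        ring
      show (φ * χ) x * χ⁻¹ (1 - x) = (φ * χ) (x / (1 - x)) * φ (x / (1 - x) + 1)
      rw [h1, div_eq_mul_inv, MulChar.inv_apply']
      calc (φ * χ) x * χ (1 - x)⁻¹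
          = (φ * χ) x * χ (1 - x)⁻¹ * (φ (1 - x)⁻¹ * φ (1 - x)⁻¹) := by
            rw [hφsq huinv, mul_one]
        _ = (φ * χ) (x * (1 - x)⁻¹) * φ (1 - x)⁻¹ := by
            simp only [MulChar.mul_apply, map_mul]; ring
  -- Step C: RHS = S
  have hφ4 : φ (4 : ZMod p) = 1 := by
    have h42 : (4 : ZMod p) = 2 * 2 := by norm_num
    rw [h42, map_mul]; exact hφsq h2ne
  have stepC : ∑ t ∈ univ.filter (fun t : ZMod p => t ≠ 0 ∧ t ≠ 1),
      χ (t ^ 2 / (4 * (1 - t))) = S := by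
    have hext : ∑ t ∈ univ.filter (fun t : ZMod p => t ≠ 0 ∧ t ≠ 1),
        χ (t ^ 2 / (4 * (1 - t))) = ∑ t : ZMod p, χ (t ^ 2 / (4 * (1 - t))) := by
      apply Finset.sum_filter_of_ne
      intro t _ hne
      constructor
      · rintro rfl; exact hne (by simp [MulChar.map_zero])
      · rintro rfl; exact hne (by simp [MulChar.map_zero])
    rw [hext,
      ← Finset.sum_fiberwise' univ (fun t : ZMod p => t ^ 2 / (4 * (1 - t))) (fun b => χ b)]
    have hcardfib : ∀ b : ZMod p, b ≠ 0 →
        (((univ.filter (fun t : ZMod p => t ^ 2 / (4 * (1 - t)) = b)).card : ℤ) : ℂ)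
          = φ (b ^ 2 + b) + 1 := by
      intro b hb
      have hmem : ∀ t : ZMod p,
          (t ^ 2 / (4 * (1 - t)) = b) ↔ (t + 2 * b) ^ 2 = 4 * (b ^ 2 + b) := by
        intro t
        by_cases ht1 : t = 1
        · subst ht1
          simp only [sub_self, mul_zero, div_zero]
          constructor
          · intro h; exact absurd h.symm hb
          · intro h
            exact absurd (show (1 : ZMod p) = 0 by linear_combination h) one_ne_zero
        · have hden : (4 : ZMod p) * (1 - t) ≠ 0 :=
            mul_ne_zero h4ne (sub_ne_zero.mpr fun h => ht1 h.symm)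
          rw [div_eq_iff hden]
          constructor <;> intro h <;> linear_combination h
      have heq1 : (univ.filter (fun t : ZMod p => t ^ 2 / (4 * (1 - t)) = b))
          = univ.filter (fun t : ZMod p => (t + 2 * b) ^ 2 = 4 * (b ^ 2 + b)) :=
        Finset.filter_congr fun t _ => by simpa using hmem t
      have heq2 : (univ.filter (fun t : ZMod p => (t + 2 * b) ^ 2 = 4 * (b ^ 2 + b))).card
          = (univ.filter (fun x : ZMod p => x ^ 2 = 4 * (b ^ 2 + b))).card := by
        apply Finset.card_nbij' (i := fun t => t + 2 * b) (j := fun x => x - 2 * b)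
        · intro a ha; simp only [mem_coe, mem_filter, mem_univ, true_and] at ha ⊢; exact ha
        · intro a ha; simp only [mem_coe, mem_filter, mem_univ, true_and] at ha ⊢
          linear_combination ha
        · intro a _; ring
        · intro a _; ring
      have hsq := quadraticChar_card_sqrts hchar2 (4 * (b ^ 2 + b))
      have hset : {x : ZMod p | x ^ 2 = 4 * (b ^ 2 + b)}.toFinset
          = univ.filter (fun x : ZMod p => x ^ 2 = 4 * (b ^ 2 + b)) := Set.toFinset_setOf _
      rw [hset] at hsq
      calc (((univ.filter (fun t : ZMod p => t ^ 2 / (4 * (1 - t)) = b)).card : ℤ) : ℂ)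
          = ((quadraticChar (ZMod p) (4 * (b ^ 2 + b)) + 1 : ℤ) : ℂ) := by
            rw [heq1, heq2, ← hsq]
        _ = φ (4 * (b ^ 2 + b)) + 1 := by push_cast; rfl
        _ = φ 4 * φ (b ^ 2 + b) + 1 := by rw [map_mul]
        _ = φ (b ^ 2 + b) + 1 := by rw [hφ4, one_mul]
    have hper : ∀ b : ZMod p,
        (∑ t ∈ univ.filter (fun t : ZMod p => t ^ 2 / (4 * (1 - t)) = b), χ b)
          = (φ * χ) b * φ (b + 1) + χ b := by
      intro b
      rw [Finset.sum_const, nsmul_eq_mul]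
      by_cases hb : b = 0
      · subst hb; simp [MulChar.map_zero]
      · have hc := hcardfib b hb
        push_cast at hc
        rw [hc]
        have hphi : φ (b ^ 2 + b) = φ b * φ (b + 1) := by
          rw [show b ^ 2 + b = b * (b + 1) by ring, map_mul]
        rw [hphi, MulChar.mul_apply]
        ring
    rw [Finset.sum_congr rfl (fun b _ => hper b), Finset.sum_add_distrib, hSdef,
      MulChar.sum_eq_zero_of_ne_one hχ, add_zero]
  rw [stepA, stepB, stepC]
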